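/- arXiv:1907.13217 — 2 statements merged into one kernel-verified Lean document; each statement's English description precedes it below -/
import Mathlib

section
/- Let $K = \mathbb{F}_q$ be a finite field, let $X$ be a finite subset of $\mathbb{A}^s = K^s$, let $I = I(X)$ be its vanishing ideal, let $\prec$ be a graded monomial order on $S$, and let $\Delta_\prec^p(I)_d$ be the set of monic standard polynomials of $S/I$ of degree exactly $d$. If $d \ge 2$ and the minimum distance of $C_X(d-1)$ satisfies $\delta(C_X(d-1)) > 1$, then $\delta(C_X(d)) = \deg(S/I) - \max\{\deg(S/(I,f)) \mid f \in \Delta_\prec^p(I)_d\}$. -/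
open MvPolynomial
open scoped MonomialOrder

variable {K : Type*} [Field K] {s : ℕ}

/-- The exponent of the initial (leading) monomial of `f` with respect to the
monomial order `m` (it is `0` for `f = 0`). -/
noncomputable def leadExp (m : MonomialOrder (Fin s)) (f : MvPolynomial (Fin s) K) :
    Fin s →₀ ℕ :=
  m.toSyn.symm (f.support.sup fun a => m.toSyn a)

/-- The coefficient of the initial monomial of `f`; `f` is monic when this is `1`. -/
noncomputable def leadCoeff (m : MonomialOrder (Fin s)) (f : MvPolynomial (Fin s) K) : K :=
  f.coeff (leadExp m f)

/-- The initial monomial `in_≺(f)` of `f`, as a (monic) monomial of the polynomial ring. -/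
noncomputable def leadMon (m : MonomialOrder (Fin s)) (f : MvPolynomial (Fin s) K) :
    MvPolynomial (Fin s) K :=
  monomial (leadExp m f) (1 : K)

/-- The initial ideal `in_≺(I)` of an ideal `I`: the ideal generated by the initial
monomials of the nonzero elements of `I`. -/
noncomputable def initialIdeal (m : MonomialOrder (Fin s)) (I : Ideal (MvPolynomial (Fin s) K)) :
    Ideal (MvPolynomial (Fin s) K) :=
  Ideal.span { g | ∃ f ∈ I, f ≠ 0 ∧ g = leadMon m f }

/-- The footprint `Δ_≺(I)` of `S/I`: the set of standard monomials, i.e. the (monic)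
monomials that do not belong to the initial ideal of `I`. -/
noncomputable def stdMonomials (m : MonomialOrder (Fin s)) (I : Ideal (MvPolynomial (Fin s) K)) :
    Set (MvPolynomial (Fin s) K) :=
  { g | (∃ a : Fin s →₀ ℕ, g = monomial a (1 : K)) ∧ g ∉ initialIdeal m I }

/-- `KΔ_≺(I)`, the `K`-linear span of the standard monomials of `S/I`. -/
noncomputable def stdSpan (m : MonomialOrder (Fin s)) (I : Ideal (MvPolynomial (Fin s) K)) :
    Submodule K (MvPolynomial (Fin s) K) :=
  Submodule.span K (stdMonomials m I)

/-- A monomial order is graded if monomials are first compared by their total degrees. -/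
def IsGradedOrder (m : MonomialOrder (Fin s)) : Prop :=
  ∀ a b : Fin s →₀ ℕ, a.degree < b.degree → a ≺[m] b

/-- The vanishing ideal `I(X)` of a set of points `X ⊆ 𝔸^s = K^s`. -/
def affVanishingIdeal (X : Set (Fin s → K)) : Ideal (MvPolynomial (Fin s) K) where
  carrier := { f | ∀ x ∈ X, eval x f = 0 }
  add_mem' := by
    intro a b ha hb x hx
    simp [ha x hx, hb x hx]
  zero_mem' := by intro x hx; simp
  smul_mem' := by
    intro c f hf x hx
    simp [smul_eq_mul, hf x hx]

/-- The evaluation map `S → K^X`, `f ↦ (f(P₁),…,f(P_m))`, at the points of a finite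
set `X` of points of `𝔸^s`. -/
noncomputable def evalMap (X : Finset (Fin s → K)) :
    MvPolynomial (Fin s) K →ₗ[K] (X → K) where
  toFun f := fun x => eval (x : Fin s → K) f
  map_add' f g := by funext x; simp
  map_smul' c f := by funext x; simp [Algebra.smul_def]

/-- The degree `deg(S/I)`.  For the ideals considered in this paper `S/I` is a
zero-dimensional ring, and its degree (the normalized leading coefficient of the
affine Hilbert polynomial) equals `dim_K (S/I)` (and is `0` when `I = S`). -/
noncomputable def adeg (I : Ideal (MvPolynomial (Fin s) K)) : ℕ :=
  Module.finrank K (MvPolynomial (Fin s) K ⧸ I)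

/-- The affine Hilbert function `H_I^a(d) = dim_K (S_{≤d}/I_{≤d})`, computed as the
dimension of the image of `S_{≤d}` in `S/I`. -/
noncomputable def affineHilbert (I : Ideal (MvPolynomial (Fin s) K)) (d : ℕ) : ℕ :=
  Module.finrank K
    ((restrictTotalDegree (Fin s) K d).map (Submodule.restrictScalars K I).mkQ)

/-- The support `χ(D)` of a subcode `D ⊆ K^ι`. -/
def codeSupport {ι : Type*} (D : Submodule K (ι → K)) : Set ι :=
  { i | ∃ v ∈ D, v i ≠ 0 }

/-- The `r`-th generalized Hamming weight of a linear code `C ⊆ K^ι`: the minimum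
size of the support of an `r`-dimensional subcode. -/
noncomputable def ghw {ι : Type*} (C : Submodule K (ι → K)) (r : ℕ) : ℕ :=
  sInf { n | ∃ D : Submodule K (ι → K),
    D ≤ C ∧ Module.finrank K (↥D) = r ∧ (codeSupport D).ncard = n }

/-- The minimum distance of a linear code: the least Hamming weight of a nonzero
codeword. -/
noncomputable def minDist {ι : Type*} (C : Submodule K (ι → K)) : ℕ :=
  sInf { n | ∃ v ∈ C, v ≠ 0 ∧ ({ i : ι | v i ≠ 0 }).ncard = n }

/-- The affine torus `T = (K^*)^s`. -/
noncomputable def torus (K : Type*) [Field K] [Fintype K] (s : ℕ) : Finset (Fin s → K) :=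
  letI := Classical.decEq K
  Finset.univ.filter fun x => ∀ i, x i ≠ 0

/-- `V_d`: the set of squarefree (monic) monomials of degree `d`. -/
def sqfreeMonomials (K : Type*) [Field K] (s d : ℕ) : Set (MvPolynomial (Fin s) K) :=
  { g | ∃ a : Fin s →₀ ℕ, (∀ i, a i ≤ 1) ∧ a.degree = d ∧ g = monomial a (1 : K) }

/-- `V_{≤d}`: the set of squarefree (monic) monomials of degree at most `d`. -/
def sqfreeMonomialsLe (K : Type*) [Field K] (s d : ℕ) : Set (MvPolynomial (Fin s) K) :=
  { g | ∃ a : Fin s →₀ ℕ, (∀ i, a i ≤ 1) ∧ a.degree ≤ d ∧ g = monomial a (1 : K) }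

/-- `Δ_≺^p(I)_d`: the set of monic standard polynomials of `S/I` of degree exactly `d`. -/
def stdPolysOfDegree (m : MonomialOrder (Fin s)) (I : Ideal (MvPolynomial (Fin s) K))
    (d : ℕ) : Set (MvPolynomial (Fin s) K) :=
  { f | f ∈ stdSpan m I ∧ f ≠ 0 ∧ leadCoeff m f = 1 ∧ f.totalDegree = d }

/-! ### Auxiliary lemmas -/

section Lead

variable (m : MonomialOrder (Fin s))

lemma toSyn_leadExp (f : MvPolynomial (Fin s) K) :
    m.toSyn (leadExp m f) = f.support.sup fun a => m.toSyn a :=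
  m.toSyn.apply_symm_apply _

lemma leadExp_mem_support {f : MvPolynomial (Fin s) K} (hf : f ≠ 0) :
    leadExp m f ∈ f.support := by
  obtain ⟨a, ha, hsup⟩ := Finset.exists_mem_eq_sup f.support
    (MvPolynomial.support_nonempty.mpr hf) (fun a => m.toSyn a)
  have : leadExp m f = a := by
    rw [leadExp, hsup, AddEquiv.symm_apply_apply]
  rwa [this]

lemma le_toSyn_leadExp {f : MvPolynomial (Fin s) K} {a : Fin s →₀ ℕ}
    (ha : a ∈ f.support) : m.toSyn a ≤ m.toSyn (leadExp m f) := by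
  rw [toSyn_leadExp]
  exact Finset.le_sup ha

lemma leadCoeff_ne_zero {f : MvPolynomial (Fin s) K} (hf : f ≠ 0) :
    leadCoeff m f ≠ 0 :=
  MvPolynomial.mem_support_iff.mp (leadExp_mem_support m hf)

lemma leadExp_zero : leadExp m (0 : MvPolynomial (Fin s) K) = 0 := by
  apply m.toSyn.injective
  rw [toSyn_leadExp, map_zero]
  simp

lemma leadExp_monomial {a : Fin s →₀ ℕ} {c : K} (hc : c ≠ 0) :
    leadExp m (MvPolynomial.monomial a c) = a := by
  classical
  apply m.toSyn.injective
  rw [toSyn_leadExp, MvPolynomial.support_monomial, if_neg hc, Finset.sup_singleton]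

lemma leadCoeff_monomial {a : Fin s →₀ ℕ} {c : K} (hc : c ≠ 0) :
    leadCoeff m (MvPolynomial.monomial a c) = c := by
  classical
  rw [leadCoeff, leadExp_monomial m hc, MvPolynomial.coeff_monomial, if_pos rfl]

lemma leadExp_smul {c : K} (hc : c ≠ 0) (f : MvPolynomial (Fin s) K) :
    leadExp m (c • f) = leadExp m f := by
  unfold leadExp
  rw [MvPolynomial.support_smul_eq hc]

lemma leadCoeff_smul {c : K} (hc : c ≠ 0) (f : MvPolynomial (Fin s) K) :
    leadCoeff m (c • f) = c * leadCoeff m f := by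
  rw [leadCoeff, leadExp_smul m hc, MvPolynomial.coeff_smul, leadCoeff, smul_eq_mul]

end Lead
section Division

variable (m : MonomialOrder (Fin s))

lemma initialIdeal_eq_span_image (I : Ideal (MvPolynomial (Fin s) K)) :
    initialIdeal m I = Ideal.span ((fun a => MvPolynomial.monomial a (1 : K)) ''
      {a | ∃ f ∈ I, f ≠ 0 ∧ a = leadExp m f}) := by
  unfold initialIdeal
  congr 1
  ext g
  constructor
  · rintro ⟨f, hf, hf0, rfl⟩
    exact ⟨leadExp m f, ⟨f, hf, hf0, rfl⟩, rfl⟩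
  · rintro ⟨a, ⟨f, hf, hf0, rfl⟩, rfl⟩
    exact ⟨f, hf, hf0, rfl⟩

lemma exists_remainder (I : Ideal (MvPolynomial (Fin s) K)) (g : MvPolynomial (Fin s) K) :
    ∃ r : MvPolynomial (Fin s) K, g - r ∈ I ∧
      (∀ a ∈ r.support, MvPolynomial.monomial a (1 : K) ∉ initialIdeal m I) ∧
      (∀ a ∈ r.support, m.toSyn a ≤ m.toSyn (leadExp m g)) := by
  classical
  suffices H : ∀ N : m.syn, ∀ g : MvPolynomial (Fin s) K, m.toSyn (leadExp m g) ≤ N →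
      ∃ r : MvPolynomial (Fin s) K, g - r ∈ I ∧
      (∀ a ∈ r.support, MvPolynomial.monomial a (1 : K) ∉ initialIdeal m I) ∧
      (∀ a ∈ r.support, m.toSyn a ≤ m.toSyn (leadExp m g)) by
    exact H _ g le_rfl
  intro N
  induction N using WellFoundedLT.induction with
  | _ N ih =>
  intro g hgN
  by_cases hg0 : g = 0
  · refine ⟨0, by simp [hg0], by simp, by simp⟩
  by_cases hgI : MvPolynomial.monomial (leadExp m g) (1 : K) ∈ initialIdeal m I
  · -- reduction step
    rw [initialIdeal_eq_span_image, MvPolynomial.mem_ideal_span_monomial_image] at hgI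
    obtain ⟨si, ⟨f, hfI, hf0, rfl⟩, hle⟩ := hgI (leadExp m g) (by
      rw [MvPolynomial.mem_support_iff, MvPolynomial.coeff_monomial, if_pos rfl]
      exact one_ne_zero)
    set b := leadExp m g - leadExp m f with hb
    have hba : b + leadExp m f = leadExp m g := tsub_add_cancel_of_le hle
    set c := leadCoeff m g * (leadCoeff m f)⁻¹ with hc
    set h := MvPolynomial.monomial b c * f with hh
    have hhI : h ∈ I := Ideal.mul_mem_left _ _ hfI
    have hcoeff : h.coeff (leadExp m g) = leadCoeff m g := by
      rw [hh, ← hba, MvPolynomial.coeff_monomial_mul, hc]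
      rw [mul_assoc, show MvPolynomial.coeff (leadExp m f) f = leadCoeff m f from rfl,
        inv_mul_cancel₀ (leadCoeff_ne_zero m hf0), mul_one]
    have hsupph : ∀ a ∈ h.support, m.toSyn a ≤ m.toSyn (leadExp m g) := by
      intro a ha
      rw [MvPolynomial.mem_support_iff, hh, MvPolynomial.coeff_monomial_mul'] at ha
      by_cases hba' : b ≤ a
      · rw [if_pos hba'] at ha
        have haf : a - b ∈ f.support := by
          rw [MvPolynomial.mem_support_iff]
          exact fun h0 => ha (by rw [h0, mul_zero])
        have h1 : m.toSyn (a - b) ≤ m.toSyn (leadExp m f) := le_toSyn_leadExp m haf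
        have h2 : a = b + (a - b) := (add_tsub_cancel_of_le hba').symm
        calc m.toSyn a = m.toSyn b + m.toSyn (a - b) := by
              rw [← map_add, ← h2]
          _ ≤ m.toSyn b + m.toSyn (leadExp m f) := by exact add_le_add le_rfl h1
          _ = m.toSyn (leadExp m g) := by rw [← map_add, hba]
      · rw [if_neg hba'] at ha
        exact absurd rfl ha
    set g' := g - h with hg'
    have hgsub : ∀ a ∈ g'.support, m.toSyn a ≤ m.toSyn (leadExp m g) := by
      intro a ha
      rcases Finset.mem_union.mp (MvPolynomial.support_sub _ g h ha) with h' | h'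
      · exact le_toSyn_leadExp m h'
      · exact hsupph a h'
    have hnot : leadExp m g ∉ g'.support := by
      rw [MvPolynomial.notMem_support_iff, hg', MvPolynomial.coeff_sub, hcoeff]
      exact sub_self _
    by_cases hg'0 : g' = 0
    · have hgh : g = h := by
        have := hg'0
        rw [hg', sub_eq_zero] at this
        exact this
      exact ⟨0, by simpa [hgh] using hhI, by simp, by simp⟩
    · have hlt : m.toSyn (leadExp m g') < m.toSyn (leadExp m g) := by
        have hmem := leadExp_mem_support m hg'0
        refine lt_of_le_of_ne (hgsub _ hmem) fun he => hnot ?_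
        rwa [m.toSyn.injective he] at hmem
      obtain ⟨r, hrI, hrstd, hrb⟩ := ih (m.toSyn (leadExp m g'))
        (lt_of_lt_of_le hlt hgN) g' le_rfl
      refine ⟨r, ?_, hrstd, fun a ha => le_trans (hrb a ha) hlt.le⟩
      have heq : g - r = h + (g' - r) := by rw [hg']; ring
      rw [heq]
      exact Ideal.add_mem _ hhI hrI
  · -- split off the leading term, which is a standard monomial
    set r₁ := MvPolynomial.monomial (leadExp m g) (leadCoeff m g) with hr₁
    have hsuppr₁ : r₁.support = {leadExp m g} := by
      rw [hr₁, MvPolynomial.support_monomial, if_neg (leadCoeff_ne_zero m hg0)]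
    set g' := g - r₁ with hg'
    have hsub : ∀ a ∈ g'.support, a ∈ g.support ∧ a ≠ leadExp m g := by
      intro a ha
      rw [MvPolynomial.mem_support_iff, hg', MvPolynomial.coeff_sub, hr₁,
        MvPolynomial.coeff_monomial] at ha
      by_cases hae : leadExp m g = a
      · rw [if_pos hae, ← hae] at ha
        exact absurd (show MvPolynomial.coeff (leadExp m g) g - leadCoeff m g = 0 from
          sub_self (leadCoeff m g)) ha
      · rw [if_neg hae, sub_zero] at ha
        exact ⟨MvPolynomial.mem_support_iff.mpr ha, fun h' => hae h'.symm⟩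
    by_cases hg'0 : g' = 0
    · refine ⟨r₁, ?_, ?_, ?_⟩
      · rw [← hg', hg'0]; exact Ideal.zero_mem I
      · intro a ha
        rw [hsuppr₁, Finset.mem_singleton] at ha
        rwa [ha]
      · intro a ha
        rw [hsuppr₁, Finset.mem_singleton] at ha
        rw [ha]
    · have hlt : m.toSyn (leadExp m g') < m.toSyn (leadExp m g) := by
        have hmem := leadExp_mem_support m hg'0
        obtain ⟨hmemg, hne⟩ := hsub _ hmem
        exact lt_of_le_of_ne (le_toSyn_leadExp m hmemg)
          (fun he => hne (m.toSyn.injective he))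
      obtain ⟨r, hrI, hrstd, hrb⟩ := ih (m.toSyn (leadExp m g'))
        (lt_of_lt_of_le hlt hgN) g' le_rfl
      refine ⟨r₁ + r, ?_, ?_, ?_⟩
      · have heq : g - (r₁ + r) = g' - r := by rw [hg']; ring
        rw [heq]; exact hrI
      · intro a ha
        rcases Finset.mem_union.mp (MvPolynomial.support_add ha) with h' | h'
        · rw [hsuppr₁, Finset.mem_singleton] at h'
          rwa [h']
        · exact hrstd a h'
      · intro a ha
        rcases Finset.mem_union.mp (MvPolynomial.support_add ha) with h' | h'
        · rw [hsuppr₁, Finset.mem_singleton] at h'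
          rw [h']
        · exact le_trans (hrb a h') hlt.le

end Division
section StdSpan

variable (m : MonomialOrder (Fin s))

lemma support_not_initial_of_mem_stdSpan {I : Ideal (MvPolynomial (Fin s) K)}
    {r : MvPolynomial (Fin s) K} (hr : r ∈ stdSpan m I) :
    ∀ a ∈ r.support, MvPolynomial.monomial a (1 : K) ∉ initialIdeal m I := by
  classical
  refine Submodule.span_induction ?_ ?_ ?_ ?_ hr
  · rintro g ⟨⟨a, rfl⟩, hgnot⟩ a' ha'
    rw [MvPolynomial.support_monomial, if_neg (one_ne_zero (α := K)),
      Finset.mem_singleton] at ha'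
    rwa [ha']
  · simp
  · intro x y _ _ hx hy a ha
    rcases Finset.mem_union.mp (MvPolynomial.support_add ha) with h' | h'
    · exact hx a h'
    · exact hy a h'
  · intro c x _ hx a ha
    exact hx a (Finsupp.support_smul ha)

lemma mem_stdSpan_of_support (I : Ideal (MvPolynomial (Fin s) K))
    (r : MvPolynomial (Fin s) K)
    (h : ∀ a ∈ r.support, MvPolynomial.monomial a (1 : K) ∉ initialIdeal m I) :
    r ∈ stdSpan m I := by
  rw [show r = ∑ v ∈ r.support, MvPolynomial.monomial v (MvPolynomial.coeff v r) from r.as_sum]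
  refine Submodule.sum_mem _ fun a ha => ?_
  have : MvPolynomial.monomial a (MvPolynomial.coeff a r) =
      (MvPolynomial.coeff a r) • MvPolynomial.monomial a (1 : K) := by
    rw [MvPolynomial.smul_monomial, smul_eq_mul, mul_one]
  rw [this]
  exact Submodule.smul_mem _ _ (Submodule.subset_span ⟨⟨a, rfl⟩, h a ha⟩)

lemma eq_zero_of_mem_stdSpan_of_mem {I : Ideal (MvPolynomial (Fin s) K)}
    {r : MvPolynomial (Fin s) K} (hr : r ∈ stdSpan m I) (hrI : r ∈ I) : r = 0 := by
  by_contra hr0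
  exact support_not_initial_of_mem_stdSpan m hr _ (leadExp_mem_support m hr0)
    (Ideal.subset_span ⟨r, hrI, hr0, rfl⟩)

end StdSpan

section Graded

variable {m : MonomialOrder (Fin s)}

lemma degree_le_of_syn_le (hm : IsGradedOrder m) {a b : Fin s →₀ ℕ}
    (h : m.toSyn a ≤ m.toSyn b) : a.degree ≤ b.degree := by
  by_contra hab
  exact absurd (hm b a (not_le.mp hab)) (not_lt.mpr h)

lemma degree_eq_sum (a : Fin s →₀ ℕ) : (a.sum fun _ e => e) = a.degree := rfl

lemma totalDegree_le_of_syn_bound (hm : IsGradedOrder m) {g r : MvPolynomial (Fin s) K}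
    (hb : ∀ a ∈ r.support, m.toSyn a ≤ m.toSyn (leadExp m g)) :
    r.totalDegree ≤ g.totalDegree := by
  rw [MvPolynomial.totalDegree]
  refine Finset.sup_le fun a ha => ?_
  rw [degree_eq_sum]
  by_cases hg0 : g = 0
  · have h0 : m.toSyn a ≤ m.toSyn (leadExp m (0 : MvPolynomial (Fin s) K)) := by
      rw [← hg0]; exact hb a ha
    rw [leadExp_zero] at h0
    have hdeg : a.degree ≤ (0 : Fin s →₀ ℕ).degree := degree_le_of_syn_le hm h0
    simp only [map_zero, Nat.le_zero] at hdeg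
    simp [hdeg]
  · calc a.degree ≤ (leadExp m g).degree := degree_le_of_syn_le hm (hb a ha)
      _ ≤ g.totalDegree := by
        have := MvPolynomial.le_totalDegree (leadExp_mem_support m hg0)
        rwa [degree_eq_sum] at this

lemma totalDegree_eq_degree_leadExp (hm : IsGradedOrder m) {g : MvPolynomial (Fin s) K}
    (hg0 : g ≠ 0) : (leadExp m g).degree = g.totalDegree := by
  refine le_antisymm ?_ ?_
  · have := MvPolynomial.le_totalDegree (leadExp_mem_support m hg0)
    rwa [degree_eq_sum] at this
  · rw [MvPolynomial.totalDegree]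
    refine Finset.sup_le fun a ha => ?_
    rw [degree_eq_sum]
    exact degree_le_of_syn_le hm (le_toSyn_leadExp m ha)

end Graded

section FinsuppDegree

lemma Finsupp.degree_add' (a b : Fin s →₀ ℕ) : (a + b).degree = a.degree + b.degree := by
  simp only [Finsupp.degree_eq_weight_one]
  exact map_add _ a b

lemma Finsupp.degree_single' (i : Fin s) (n : ℕ) : (Finsupp.single i n).degree = n := by
  classical
  by_cases hn : n = 0
  · simp [hn]
  · exact Finsupp.degree_single i n

lemma exists_le_degree_eq {b : Fin s →₀ ℕ} {d : ℕ} (hd : d ≤ b.degree) :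
    ∃ a : Fin s →₀ ℕ, a ≤ b ∧ a.degree = d := by
  induction d with
  | zero => exact ⟨0, zero_le, map_zero _⟩
  | succ d ihd =>
    obtain ⟨a, hab, had⟩ := ihd (le_trans (Nat.le_succ d) hd)
    have hne : a ≠ b := fun h => by rw [h] at had; omega
    have : ∃ i, a i < b i := by
      by_contra hno
      push_neg at hno
      exact hne (le_antisymm hab (Finsupp.le_def.mpr hno))
    obtain ⟨i, hi⟩ := this
    refine ⟨a + Finsupp.single i 1, ?_, ?_⟩
    · rw [Finsupp.le_def]
      intro j
      by_cases hj : j = i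
      · subst hj
        simp only [Finsupp.coe_add, Pi.add_apply, Finsupp.single_eq_same]
        omega
      · have hs : (Finsupp.single i 1 : Fin s →₀ ℕ) j = 0 :=
          Finsupp.single_eq_of_ne (fun h => hj h)
        simp only [Finsupp.coe_add, Pi.add_apply, hs, add_zero]
        exact Finsupp.le_def.mp hab j
    · rw [Finsupp.degree_add', Finsupp.degree_single', had]

end FinsuppDegree
section Evaluation

/-- Indicator polynomial of the point `x`. -/
noncomputable def indicatorPoly [Fintype K] (x : Fin s → K) : MvPolynomial (Fin s) K :=
  ∏ i, (1 - (X i - C (x i)) ^ (Fintype.card K - 1))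

lemma card_pred_ne_zero [Fintype K] : Fintype.card K - 1 ≠ 0 :=
  Nat.sub_ne_zero_of_lt Fintype.one_lt_card

lemma eval_indicatorPoly_self [Fintype K] (x : Fin s → K) :
    eval x (indicatorPoly x) = 1 := by
  unfold indicatorPoly
  rw [map_prod, Finset.prod_eq_one]
  intro i _
  simp [zero_pow (card_pred_ne_zero (K := K))]

lemma eval_indicatorPoly_ne [Fintype K] {x y : Fin s → K} (h : y ≠ x) :
    eval y (indicatorPoly x) = 0 := by
  obtain ⟨i, hi⟩ : ∃ i, y i ≠ x i := by
    by_contra hno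
    push_neg at hno
    exact h (funext hno)
  unfold indicatorPoly
  rw [map_prod]
  refine Finset.prod_eq_zero (Finset.mem_univ i) ?_
  have : (y i - x i) ^ (Fintype.card K - 1) = 1 :=
    FiniteField.pow_card_sub_one_eq_one _ (sub_ne_zero_of_ne hi)
  simp [this]

lemma evalMap_surjective [Fintype K] (X : Finset (Fin s → K)) :
    Function.Surjective (evalMap (K := K) X) := by
  classical
  intro v
  refine ⟨∑ x ∈ X.attach, C (v x) * indicatorPoly (↑x : Fin s → K), ?_⟩
  funext y
  show eval (↑y : Fin s → K) (∑ x ∈ X.attach, C (v x) * indicatorPoly (↑x : Fin s → K)) = v y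
  rw [map_sum, Finset.sum_eq_single y]
  · rw [map_mul, eval_C, eval_indicatorPoly_self, mul_one]
  · intro x _ hxy
    rw [map_mul, eval_C, eval_indicatorPoly_ne (fun h => hxy ((Subtype.ext h).symm)),
      mul_zero]
  · intro h
    exact absurd (Finset.mem_attach X y) h

lemma mem_affVanishingIdeal_iff {X : Finset (Fin s → K)} {f : MvPolynomial (Fin s) K} :
    f ∈ affVanishingIdeal (↑X : Set (Fin s → K)) ↔ evalMap X f = 0 := by
  constructor
  · intro h
    funext x
    exact h (↑x) (Finset.mem_coe.mpr x.2)
  · intro h x hx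
    exact congrFun h ⟨x, Finset.mem_coe.mp hx⟩

end Evaluation

section Finrank

/-- Evaluation at a point, as an algebra homomorphism. -/
noncomputable def evalAt (x : Fin s → K) : MvPolynomial (Fin s) K →ₐ[K] K :=
  { (MvPolynomial.eval x : MvPolynomial (Fin s) K →+* K) with
    commutes' := fun r => by simp [MvPolynomial.algebraMap_eq] }

/-- Evaluation at a subset of the points of `X`, as an algebra homomorphism. -/
noncomputable def evalsOn (X : Finset (Fin s → K)) (Z : Set {x // x ∈ X}) :
    MvPolynomial (Fin s) K →ₐ[K] (Z → K) :=
  Pi.algHom _ _ fun z => evalAt (↑↑z : Fin s → K)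

lemma evalsOn_apply (X : Finset (Fin s → K)) (Z : Set {x // x ∈ X})
    (g : MvPolynomial (Fin s) K) (z : Z) :
    evalsOn X Z g z = eval (↑↑z : Fin s → K) g := rfl

lemma evalsOn_surjective [Fintype K] (X : Finset (Fin s → K)) (Z : Set {x // x ∈ X}) :
    Function.Surjective (evalsOn X Z) := by
  classical
  intro h
  obtain ⟨g, hg⟩ := evalMap_surjective X (fun x => if hx : x ∈ Z then h ⟨x, hx⟩ else 0)
  refine ⟨g, ?_⟩
  funext z
  rw [evalsOn_apply]
  have h2 := congrFun hg ↑z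
  rw [show (evalMap X) g ↑z = eval (↑↑z : Fin s → K) g from rfl] at h2
  rw [h2, dif_pos z.2]

lemma finrank_quotient_eq [Fintype K] (X : Finset (Fin s → K))
    (J : Ideal (MvPolynomial (Fin s) K)) (Z : Set {x // x ∈ X})
    (hker : RingHom.ker (evalsOn X Z) = J) :
    Module.finrank K (MvPolynomial (Fin s) K ⧸ J) = Nat.card Z := by
  haveI : Fintype ↥Z := Fintype.ofFinite _
  rw [← hker]
  have e := Ideal.quotientKerAlgEquivOfSurjective (evalsOn_surjective X Z)
  rw [e.toLinearEquiv.finrank_eq, Module.finrank_pi, Nat.card_eq_fintype_card]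

lemma ker_evalsOn_univ [Fintype K] (X : Finset (Fin s → K)) :
    RingHom.ker (evalsOn X (Set.univ : Set {x // x ∈ X})) =
      affVanishingIdeal (↑X : Set (Fin s → K)) := by
  ext f
  rw [RingHom.mem_ker]
  constructor
  · intro hf x hx
    exact congrFun hf ⟨⟨x, Finset.mem_coe.mp hx⟩, trivial⟩
  · intro hf
    funext z
    exact hf (↑↑z) (Finset.mem_coe.mpr (↑z : {x // x ∈ X}).2)

lemma ker_evalsOn_zeros [Fintype K] (X : Finset (Fin s → K))
    (f₀ : MvPolynomial (Fin s) K) :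
    RingHom.ker (evalsOn X {x : {x // x ∈ X} | eval (↑x : Fin s → K) f₀ = 0}) =
      affVanishingIdeal (↑X : Set (Fin s → K)) ⊔ Ideal.span {f₀} := by
  classical
  refine le_antisymm ?_ ?_
  · intro g hg
    rw [RingHom.mem_ker] at hg
    obtain ⟨H, hH⟩ := evalMap_surjective X
      (fun x => eval (↑x : Fin s → K) g * (eval (↑x : Fin s → K) f₀)⁻¹)
    have hgI : g - H * f₀ ∈ affVanishingIdeal (↑X : Set (Fin s → K)) := by
      intro x hx
      have hxm : x ∈ X := Finset.mem_coe.mp hx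
      have hH' : eval x H = eval x g * (eval x f₀)⁻¹ := congrFun hH ⟨x, hxm⟩
      by_cases h0 : eval x f₀ = 0
      · have hg0 : eval x g = 0 := congrFun hg ⟨⟨x, hxm⟩, h0⟩
        simp [map_sub, map_mul, hH', hg0, h0]
      · rw [map_sub, map_mul, hH', mul_assoc, inv_mul_cancel₀ h0, mul_one, sub_self]
    have hrepr : g = (g - H * f₀) + H * f₀ := by ring
    rw [hrepr]
    exact Ideal.add_mem _ (Ideal.mem_sup_left hgI)
      (Ideal.mem_sup_right (Ideal.mem_span_singleton.mpr ⟨H, mul_comm H f₀⟩))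
  · refine sup_le ?_ ?_
    · intro g hg
      rw [RingHom.mem_ker]
      funext z
      exact hg (↑↑z) (Finset.mem_coe.mpr (↑z : {x // x ∈ X}).2)
    · rw [Ideal.span_le, Set.singleton_subset_iff]
      rw [SetLike.mem_coe, RingHom.mem_ker]
      funext z
      exact z.2

end Finrank
section Assembly

lemma evalMap_apply (X : Finset (Fin s → K)) (f : MvPolynomial (Fin s) K)
    (x : {x // x ∈ X}) : evalMap X f x = eval (↑x : Fin s → K) f := rfl

lemma adeg_vanishing [Fintype K] (X : Finset (Fin s → K)) :
    adeg (affVanishingIdeal (↑X : Set (Fin s → K))) = X.card := by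
  rw [adeg, finrank_quotient_eq X _ Set.univ (ker_evalsOn_univ X),
    Nat.card_congr (Equiv.Set.univ _), Nat.card_eq_fintype_card, Fintype.card_coe]

lemma adeg_sup_eq [Fintype K] (X : Finset (Fin s → K)) (f : MvPolynomial (Fin s) K) :
    adeg (affVanishingIdeal (↑X : Set (Fin s → K)) ⊔ Ideal.span {f}) =
      X.card - ({x : {x // x ∈ X} | evalMap X f x ≠ 0}).ncard := by
  rw [adeg, finrank_quotient_eq X _ _ (ker_evalsOn_zeros X f)]
  have hz : {x : {x // x ∈ X} | eval (↑x : Fin s → K) f = 0} =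
      ({x : {x // x ∈ X} | evalMap X f x ≠ 0})ᶜ := by
    ext x
    simp [evalMap_apply]
  rw [Nat.card_coe_set_eq, hz]
  have hcompl := Set.ncard_add_ncard_compl {x : {x // x ∈ X} | evalMap X f x ≠ 0}
  rw [Nat.card_eq_fintype_card, Fintype.card_coe] at hcompl
  have hle : ({x : {x // x ∈ X} | evalMap X f x ≠ 0}).ncard ≤ X.card := by omega
  omega

lemma evalMap_ne_zero_of_std [Fintype K] {X : Finset (Fin s → K)}
    {m : MonomialOrder (Fin s)} {f : MvPolynomial (Fin s) K}
    (hf : f ∈ stdSpan m (affVanishingIdeal (↑X : Set (Fin s → K)))) (hf0 : f ≠ 0) :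
    evalMap X f ≠ 0 := fun h =>
  hf0 (eq_zero_of_mem_stdSpan_of_mem m hf (mem_affVanishingIdeal_iff.mpr h))

lemma exists_std_rep [Fintype K] (X : Finset (Fin s → K)) (m : MonomialOrder (Fin s))
    (hm : IsGradedOrder m) (e : ℕ) {v : {x // x ∈ X} → K}
    (hv : v ∈ (restrictTotalDegree (Fin s) K e).map (evalMap X)) :
    ∃ r, r ∈ stdSpan m (affVanishingIdeal (↑X : Set (Fin s → K))) ∧
      r.totalDegree ≤ e ∧ evalMap X r = v := by
  obtain ⟨g, hg, rfl⟩ := Submodule.mem_map.mp hv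
  obtain ⟨r, hrI, hrstd, hrb⟩ := exists_remainder m _ g
  refine ⟨r, mem_stdSpan_of_support m _ r hrstd,
    le_trans (totalDegree_le_of_syn_bound hm hrb)
      ((mem_restrictTotalDegree _ _ _).mp hg), ?_⟩
  have h1 : evalMap X (g - r) = 0 := mem_affVanishingIdeal_iff.mp hrI
  rw [map_sub, sub_eq_zero] at h1
  exact h1.symm

end Assembly
section MinDistHelpers

lemma minDist_le' {ι : Type*} {C : Submodule K (ι → K)} {v : ι → K}
    (hv : v ∈ C) (h0 : v ≠ 0) : minDist C ≤ ({i | v i ≠ 0}).ncard :=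
  Nat.sInf_le ⟨v, hv, h0, rfl⟩

lemma exists_minDist {ι : Type*} {C : Submodule K (ι → K)}
    (h : ∃ v ∈ C, v ≠ (0 : ι → K)) :
    ∃ v ∈ C, v ≠ 0 ∧ ({i | v i ≠ 0}).ncard = minDist C := by
  have hne : {n | ∃ v ∈ C, v ≠ 0 ∧ ({i | v i ≠ 0}).ncard = n}.Nonempty := by
    obtain ⟨v, hv, h0⟩ := h
    exact ⟨_, v, hv, h0, rfl⟩
  exact Nat.sInf_mem hne

end MinDistHelpers
/-- Corollary (recursive degree formula for the minimum distance of the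
Reed–Muller-type code `C_X(d)`). -/
theorem minDist_reed_muller_recursive [Fintype K] (X : Finset (Fin s → K))
    (m : MonomialOrder (Fin s)) (hm : IsGradedOrder m) (d : ℕ) (hd : 2 ≤ d)
    (hprev : 1 < minDist ((restrictTotalDegree (Fin s) K (d - 1)).map (evalMap X))) :
    minDist ((restrictTotalDegree (Fin s) K d).map (evalMap X)) =
      adeg (affVanishingIdeal (X : Set (Fin s → K))) -
        sSup { n | ∃ f ∈ stdPolysOfDegree m (affVanishingIdeal (X : Set (Fin s → K))) d,
          n = adeg (affVanishingIdeal (X : Set (Fin s → K)) ⊔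
                Ideal.span {f}) } := by
  classical
  set I := affVanishingIdeal ((X : Set (Fin s → K))) with hI
  -- `X` is nonempty
  have hXne : X.Nonempty := by
    rw [Finset.nonempty_iff_ne_empty]
    rintro rfl
    have hempty : minDist ((restrictTotalDegree (Fin s) K (d - 1)).map
        (evalMap (∅ : Finset (Fin s → K)))) = 0 := by
      rw [minDist]
      convert Nat.sInf_empty
      rw [Set.eq_empty_iff_forall_notMem]
      rintro n ⟨v, _, hv0, _⟩
      exact hv0 (funext fun x => absurd x.2 (Finset.notMem_empty _))
    rw [hempty] at hprev
    exact absurd hprev (by norm_num)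
  -- there exists a monic standard polynomial of degree exactly `d`
  have hdelta : ∃ f, f ∈ stdPolysOfDegree m I d := by
    by_cases hex : ∃ a : Fin s →₀ ℕ, a.degree = d ∧
        MvPolynomial.monomial a (1 : K) ∉ initialIdeal m I
    · obtain ⟨a, had, hanot⟩ := hex
      refine ⟨MvPolynomial.monomial a 1,
        Submodule.subset_span ⟨⟨a, rfl⟩, hanot⟩,
        by simp [MvPolynomial.monomial_eq_zero], ?_, ?_⟩
      · rw [leadCoeff_monomial m one_ne_zero]
      · rw [MvPolynomial.totalDegree_monomial _ one_ne_zero, degree_eq_sum, had]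
    · exfalso
      push_neg at hex
      obtain ⟨x₀, hx₀⟩ := hXne
      set v₁ : {x // x ∈ X} → K := Pi.single (⟨x₀, hx₀⟩ : {x // x ∈ X}) (1 : K) with hv₁
      obtain ⟨g, hg⟩ := evalMap_surjective X v₁
      obtain ⟨r, hrI, hrstd, hrb⟩ := exists_remainder m I g
      have hrdeg : r.totalDegree ≤ d - 1 := by
        rw [MvPolynomial.totalDegree]
        refine Finset.sup_le fun a ha => ?_
        rw [degree_eq_sum]
        by_contra hgt
        push_neg at hgt
        have hda : d ≤ a.degree := by omega
        obtain ⟨a', ha'le, ha'd⟩ := exists_le_degree_eq hda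
        have hmem : MvPolynomial.monomial a' (1 : K) ∈ initialIdeal m I := hex a' ha'd
        have hmem2 : MvPolynomial.monomial a (1 : K) ∈ initialIdeal m I := by
          have heq : MvPolynomial.monomial a (1 : K) =
              MvPolynomial.monomial (a - a') (1 : K) * MvPolynomial.monomial a' (1 : K) := by
            rw [MvPolynomial.monomial_mul, one_mul, tsub_add_cancel_of_le ha'le]
          rw [heq]
          exact Ideal.mul_mem_left _ _ hmem
        exact hrstd a ha hmem2
      have hev : evalMap X r = v₁ := by
        have h1 : evalMap X (g - r) = 0 := mem_affVanishingIdeal_iff.mp hrI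
        rw [map_sub, sub_eq_zero] at h1
        rw [← h1, hg]
      have hv0 : v₁ ≠ 0 := by
        intro h
        have h1 := congrFun h ⟨x₀, hx₀⟩
        rw [hv₁, Pi.single_eq_same] at h1
        exact one_ne_zero h1
      have hmemC : v₁ ∈
          (restrictTotalDegree (Fin s) K (d - 1)).map (evalMap X) :=
        Submodule.mem_map.mpr ⟨r, (mem_restrictTotalDegree _ _ _).mpr hrdeg, hev⟩
      have hw : ({i : {x // x ∈ X} | v₁ i ≠ 0}).ncard = 1 := by
        have hset : {i : {x // x ∈ X} | v₁ i ≠ 0} =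
            {(⟨x₀, hx₀⟩ : {x // x ∈ X})} := by
          ext x
          simp [hv₁, Pi.single_apply]
        rw [hset, Set.ncard_singleton]
      have hle := minDist_le' hmemC hv0
      rw [hw] at hle
      omega
  -- the minimum distance is the weight of some monic standard polynomial of degree `d`
  have hdmem : ∃ f ∈ stdPolysOfDegree m I d,
      ({x : {x // x ∈ X} | evalMap X f x ≠ 0}).ncard =
        minDist ((restrictTotalDegree (Fin s) K d).map (evalMap X)) := by
    obtain ⟨f₁, hf₁s, hf₁0, _, hf₁d⟩ := hdelta
    have hcode : ∃ v ∈ (restrictTotalDegree (Fin s) K d).map (evalMap X),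
        v ≠ (0 : {x // x ∈ X} → K) :=
      ⟨evalMap X f₁,
        Submodule.mem_map.mpr ⟨f₁, (mem_restrictTotalDegree _ _ _).mpr hf₁d.le, rfl⟩,
        evalMap_ne_zero_of_std hf₁s hf₁0⟩
    obtain ⟨v, hvC, hv0, hvw⟩ := exists_minDist hcode
    obtain ⟨r, hrs, hrd, hrv⟩ := exists_std_rep X m hm d hvC
    have hr0 : r ≠ 0 := by
      rintro rfl
      rw [map_zero] at hrv
      exact hv0 hrv.symm
    by_cases hrdeq : r.totalDegree = d
    · -- normalize to a monic standard polynomial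
      set c := (leadCoeff m r)⁻¹ with hc
      have hcne : c ≠ 0 := inv_ne_zero (leadCoeff_ne_zero m hr0)
      refine ⟨c • r, ⟨Submodule.smul_mem _ _ hrs, smul_ne_zero hcne hr0, ?_, ?_⟩, ?_⟩
      · rw [leadCoeff_smul m hcne, hc, inv_mul_cancel₀ (leadCoeff_ne_zero m hr0)]
      · have h1 : (c • r).totalDegree ≤ r.totalDegree := MvPolynomial.totalDegree_smul_le _ _
        have h2 : r.totalDegree ≤ (c • r).totalDegree := by
          have heq : r = c⁻¹ • (c • r) := by
            rw [smul_smul, inv_mul_cancel₀ hcne, one_smul]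
          conv_lhs => rw [heq]
          exact MvPolynomial.totalDegree_smul_le _ _
        omega
      · rw [map_smul, hrv, ← hvw]
        congr 1
        ext x
        simp [hcne]
    · -- degree at most `d - 1`: contradiction with minimality
      exfalso
      have hrd' : r.totalDegree ≤ d - 1 := by omega
      have hvC' : v ∈ (restrictTotalDegree (Fin s) K (d - 1)).map (evalMap X) :=
        Submodule.mem_map.mpr ⟨r, (mem_restrictTotalDegree _ _ _).mpr hrd', hrv⟩
      have hge : 1 < ({i : {x // x ∈ X} | v i ≠ 0}).ncard := by
        have h1 := minDist_le' hvC' hv0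
        omega
      obtain ⟨x, y, hx, hy, hxy⟩ := (Set.one_lt_ncard_iff (Set.toFinite _)).mp hge
      obtain ⟨i, hi⟩ : ∃ i, (↑x : Fin s → K) i ≠ (↑y : Fin s → K) i := by
        by_contra hno
        push_neg at hno
        exact hxy (Subtype.ext (funext hno))
      set g' := (MvPolynomial.X i - MvPolynomial.C ((↑y : Fin s → K) i)) * r with hg'
      have hg'deg : g'.totalDegree ≤ d := by
        refine le_trans (MvPolynomial.totalDegree_mul _ _) ?_
        have h1 : (MvPolynomial.X i - MvPolynomial.C ((↑y : Fin s → K) i) :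
            MvPolynomial (Fin s) K).totalDegree ≤ 1 := by
          rw [sub_eq_add_neg, ← map_neg]
          refine le_trans (MvPolynomial.totalDegree_add _ _) ?_
          simp [MvPolynomial.totalDegree_X, MvPolynomial.totalDegree_C]
        omega
      have hval : ∀ z : {x // x ∈ X},
          evalMap X g' z = ((↑z : Fin s → K) i - (↑y : Fin s → K) i) * v z := by
        intro z
        rw [evalMap_apply, hg', map_mul, map_sub, MvPolynomial.eval_X,
          MvPolynomial.eval_C, ← hrv, evalMap_apply]
      have hsub : {z : {x // x ∈ X} | evalMap X g' z ≠ 0} ⊂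
          {i : {x // x ∈ X} | v i ≠ 0} := by
        constructor
        · intro z hz
          rw [Set.mem_setOf_eq, hval] at hz
          exact fun h0 => hz (by rw [h0, mul_zero])
        · intro hsubset
          have hy' := hsubset hy
          rw [Set.mem_setOf_eq, hval, sub_self, zero_mul] at hy'
          exact hy' rfl
      have hg'ne : evalMap X g' ≠ 0 := by
        intro h0
        have hx' := congrFun h0 x
        rw [hval] at hx'
        rcases mul_eq_zero.mp hx' with h | h
        · exact absurd h (sub_ne_zero_of_ne hi)
        · exact hx h
      have hlt : ({z : {x // x ∈ X} | evalMap X g' z ≠ 0}).ncard <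
          ({i : {x // x ∈ X} | v i ≠ 0}).ncard :=
        Set.ncard_lt_ncard hsub (Set.toFinite _)
      have hmin := minDist_le'
        (Submodule.mem_map.mpr ⟨g', (mem_restrictTotalDegree _ _ _).mpr hg'deg, rfl⟩)
        hg'ne
      omega
  -- now compute both sides
  obtain ⟨f₀, hf₀, hf₀w⟩ := hdmem
  set n₀ := minDist ((restrictTotalDegree (Fin s) K d).map (evalMap X)) with hn₀
  have hn₀pos : 1 ≤ n₀ := by
    rw [← hf₀w]
    obtain ⟨hfs, hf0, _, _⟩ := hf₀
    have hne := evalMap_ne_zero_of_std hfs hf0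
    have hnonempty : {x : {x // x ∈ X} | evalMap X f₀ x ≠ 0}.Nonempty := by
      by_contra hno
      rw [Set.not_nonempty_iff_eq_empty, Set.eq_empty_iff_forall_notMem] at hno
      refine hne (funext fun z => ?_)
      have hz := hno z
      rw [Set.mem_setOf_eq, not_not] at hz
      exact hz
    have hpos := (Set.ncard_pos (Set.toFinite _)).mpr hnonempty
    omega
  have hn₀le : n₀ ≤ X.card := by
    rw [← hf₀w]
    calc ({x : {x // x ∈ X} | evalMap X f₀ x ≠ 0}).ncard
        ≤ (Set.univ : Set {x // x ∈ X}).ncard :=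
          Set.ncard_le_ncard (Set.subset_univ _) (Set.toFinite _)
      _ = X.card := by
          rw [Set.ncard_univ, Nat.card_eq_fintype_card, Fintype.card_coe]
  -- identify the sSup
  have hB : sSup {n | ∃ f ∈ stdPolysOfDegree m I d, n = adeg (I ⊔ Ideal.span {f})} =
      X.card - n₀ := by
    refine le_antisymm ?_ ?_
    · refine csSup_le ⟨_, f₀, hf₀, rfl⟩ ?_
      rintro b ⟨f, hf, rfl⟩
      rw [hI, adeg_sup_eq]
      have hfC : evalMap X f ∈ (restrictTotalDegree (Fin s) K d).map (evalMap X) :=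
        Submodule.mem_map.mpr ⟨f, (mem_restrictTotalDegree _ _ _).mpr hf.2.2.2.le, rfl⟩
      have hn₀' : n₀ ≤ ({x : {x // x ∈ X} | evalMap X f x ≠ 0}).ncard :=
        minDist_le' hfC (evalMap_ne_zero_of_std hf.1 hf.2.1)
      exact Nat.sub_le_sub_left hn₀' _
    · refine le_csSup ⟨X.card, ?_⟩ ⟨f₀, hf₀, ?_⟩
      · rintro b ⟨f, hf, rfl⟩
        rw [hI, adeg_sup_eq]
        exact Nat.sub_le _ _
      · rw [hI, adeg_sup_eq, hf₀w]
  rw [hB, hI, adeg_vanishing]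
  omega
end

section
/- Let $\mathcal{C}_\mathcal{P}(d)$ be the toric code of degree $d$ over the $d$-th hypersimplex of $\mathbb{R}^s$ ($s \ge 2$, $1 \le d \le s$) on the affine torus $T = (\mathbb{F}_q^*)^s$. Then the length of $\mathcal{C}_\mathcal{P}(d)$ is $(q-1)^s$, and its dimension is $\binom{s}{d}$ if $q \ge 3$ and $1$ if $q = 2$. -/
open MvPolynomial
open scoped MonomialOrder

variable {K : Type*} [Field K] {s : ℕ}

section AuxToric

open Finset

lemma mem_torus_iff {K : Type*} [Field K] [Fintype K] {s : ℕ} (x : Fin s → K) :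
    x ∈ torus K s ↔ ∀ i, x i ≠ 0 := by
  classical
  unfold torus
  simp

lemma torus_card (K : Type*) [Field K] [Fintype K] (s : ℕ) :
    (torus K s).card = (Fintype.card K - 1) ^ s := by
  classical
  have h1 : (torus K s).card = Fintype.card {x : Fin s → K // x ∈ torus K s} :=
    (Fintype.card_coe _).symm
  have e : {x : Fin s → K // x ∈ torus K s} ≃ (Fin s → {y : K // y ≠ 0}) := by
    refine (Equiv.subtypeEquivRight ?_).trans (Equiv.subtypePiEquivPi)
    intro x; exact mem_torus_iff x
  rw [h1, Fintype.card_congr e, Fintype.card_pi]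
  have hy : Fintype.card {y : K // y ≠ 0} = Fintype.card K - 1 := by
    have := Fintype.card_subtype_compl (fun y : K => y = 0)
    simpa [Fintype.card_subtype_eq] using this
  simp [hy]

/-- The exponent finsupp of a squarefree monomial with support `T`. -/
def expo {s : ℕ} (T : Finset (Fin s)) : Fin s →₀ ℕ :=
  ⟨T, fun i => if i ∈ T then 1 else 0, by intro i; by_cases h : i ∈ T <;> simp [h]⟩

lemma expo_apply {s : ℕ} (T : Finset (Fin s)) (i : Fin s) :
    expo T i = if i ∈ T then 1 else 0 := rfl

lemma expo_degree {s : ℕ} (T : Finset (Fin s)) : (expo T).degree = T.card := by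
  show ∑ i ∈ (expo T).support, expo T i = T.card
  have hsupp : (expo T).support = T := rfl
  rw [hsupp, show (∑ i ∈ T, expo T i) = ∑ i ∈ T, 1 from
    Finset.sum_congr rfl (fun i hi => by simp [expo_apply, hi])]
  simp

lemma sqfree_eq_range (K : Type*) [Field K] (s d : ℕ) :
    sqfreeMonomials K s d =
      Set.range (fun T : {T : Finset (Fin s) // T.card = d} =>
        monomial (expo T.1) (1 : K)) := by
  ext g
  constructor
  · rintro ⟨a, ha1, had, rfl⟩
    have haeq : a = expo a.support := by
      ext i
      rw [expo_apply]
      by_cases h : i ∈ a.support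
      · have h0 : a i ≠ 0 := Finsupp.mem_support_iff.mp h
        have h1 := ha1 i
        simp only [if_pos h]
        omega
      · simp [h]
        exact Finsupp.notMem_support_iff.mp h
    have hcard : a.support.card = d := by
      have : a.degree = a.support.card := by
        show ∑ i ∈ a.support, a i = a.support.card
        rw [haeq]
        have hsupp : (expo a.support).support = a.support := rfl
        rw [hsupp, show (∑ i ∈ a.support, expo a.support i) = ∑ i ∈ a.support, 1 from
          Finset.sum_congr rfl (fun i hi => by simp [expo_apply, hi])]
        simp
      omega
    refine ⟨⟨a.support, hcard⟩, ?_⟩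
    show monomial (expo a.support) (1 : K) = monomial a 1
    rw [← haeq]
  · rintro ⟨T, rfl⟩
    refine ⟨expo T.1, fun i => ?_, ?_, rfl⟩
    · rw [expo_apply]; split <;> omega
    · rw [expo_degree, T.2]

lemma evalMap_monomial_expo {K : Type*} [Field K] [Fintype K] {s : ℕ}
    (T : Finset (Fin s)) (x : ↥(torus K s)) :
    evalMap (torus K s) (monomial (expo T) (1 : K)) x = ∏ i ∈ T, (x : Fin s → K) i := by
  show eval (x : Fin s → K) (monomial (expo T) (1 : K)) = _
  rw [eval_monomial, one_mul]
  unfold Finsupp.prod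
  have hsupp : (expo T).support = T := rfl
  rw [hsupp]
  exact Finset.prod_congr rfl (fun i hi => by simp [expo_apply, hi])

end AuxToric

set_option maxHeartbeats 1000000 in
set_option synthInstance.maxHeartbeats 400000 in
/-- Proposition (length and dimension of the toric code over the `d`-th
hypersimplex). -/
theorem length_and_dim_toric_code_hypersimplex (K : Type*) [Field K] [Fintype K]
    (s d : ℕ) (hs : 2 ≤ s) (hd1 : 1 ≤ d) (hds : d ≤ s) :
    (torus K s).card = (Fintype.card K - 1) ^ s ∧
    (3 ≤ Fintype.card K →
      Module.finrank K
          (↥((Submodule.span K (sqfreeMonomials K s d)).map (evalMap (torus K s)))) =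
        Nat.choose s d) ∧
    (Fintype.card K = 2 →
      Module.finrank K
          (↥((Submodule.span K (sqfreeMonomials K s d)).map (evalMap (torus K s)))) =
        1) := by
  classical
  have hcard : (torus K s).card = (Fintype.card K - 1) ^ s := torus_card K s
  -- the family of evaluated squarefree monomials
  set w : {T : Finset (Fin s) // T.card = d} → (↥(torus K s) → K) :=
    fun T => evalMap (torus K s) (monomial (expo T.1) (1 : K)) with hw
  have hmap : (Submodule.span K (sqfreeMonomials K s d)).map (evalMap (torus K s)) =
      Submodule.span K (Set.range w) := by
    rw [Submodule.map_span, sqfree_eq_range, ← Set.range_comp]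
    rfl
  -- part 2: independence via characters
  have hpart2 : 3 ≤ Fintype.card K →
      Module.finrank K
        (↥((Submodule.span K (sqfreeMonomials K s d)).map (evalMap (torus K s)))) =
      Nat.choose s d := by
    intro hq
    -- a unit different from 1
    have hKnontriv : ∃ c : Kˣ, c ≠ 1 := by
      by_contra hcon
      push_neg at hcon
      have hsub : ∀ y : K, y = 0 ∨ y = 1 := by
        intro y
        by_cases hy : y = 0
        · exact Or.inl hy
        · exact Or.inr (by simpa using congrArg (Units.val) (hcon (Units.mk0 y hy)))
      have : Fintype.card K ≤ ({0, 1} : Finset K).card := by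
        apply Finset.card_le_card
        intro y _
        rcases hsub y with h | h <;> simp [h]
      have h2 : ({0, 1} : Finset K).card ≤ 2 :=
        le_trans (Finset.card_insert_le _ _) (by simp)
      omega
    obtain ⟨c, hc⟩ := hKnontriv
    -- characters
    have hφmem : ∀ u : Fin s → Kˣ, (fun i => ((u i : K))) ∈ torus K s := by
      intro u
      rw [mem_torus_iff]
      intro i
      exact (u i).ne_zero
    set φ : (Fin s → Kˣ) → ↥(torus K s) := fun u => ⟨fun i => (u i : K), hφmem u⟩
    set χ : {T : Finset (Fin s) // T.card = d} → ((Fin s → Kˣ) →* K) := fun T =>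
      { toFun := fun u => ∏ i ∈ T.1, ((u i : K))
        map_one' := by simp [Pi.one_apply]
        map_mul' := by intro u v; simp [Pi.mul_apply, Units.val_mul, Finset.prod_mul_distrib] }
    have hχinj : Function.Injective χ := by
      intro T T' hTT'
      have key : ∀ (T : Finset (Fin s)) (i : Fin s),
          (∏ j ∈ T, ((Function.update (1 : Fin s → Kˣ) i c) j : K)) = if i ∈ T then (c : K) else 1 := by
        intro T i
        have hcongr : ∀ j ∈ T, ((Function.update (1 : Fin s → Kˣ) i c) j : K)
            = if j = i then (c : K) else 1 := by
          intro j _; by_cases h : j = i <;> simp [Function.update_apply, h]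
        rw [Finset.prod_congr rfl hcongr]
        exact Finset.prod_ite_eq' T i (fun _ => (c : K))
      have hcne : (c : K) ≠ 1 := by
        intro h; exact hc (Units.ext (by simpa using h))
      have : T.1 = T'.1 := by
        ext i
        have := congrArg (fun f : (Fin s → Kˣ) →* K => f (Function.update (1 : Fin s → Kˣ) i c)) hTT'
        rw [show (χ T) (Function.update (1 : Fin s → Kˣ) i c) = _ from key T.1 i,
          show (χ T') (Function.update (1 : Fin s → Kˣ) i c) = _ from key T'.1 i] at this
        constructor <;> intro hmem
        · by_contra hmem'
          rw [if_pos hmem, if_neg hmem'] at this; exact hcne this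
        · by_contra hmem'
          rw [if_neg hmem', if_pos hmem] at this; exact hcne this.symm
      exact Subtype.ext this
    have hindchar : LinearIndependent K (fun T => ⇑(χ T)) :=
      (linearIndependent_monoidHom (Fin s → Kˣ) K).comp χ hχinj
    have hcomp : ⇑(LinearMap.funLeft K K φ) ∘ w = fun T => ⇑(χ T) := by
      funext T
      funext u
      show w T (φ u) = ∏ i ∈ T.1, ((u i : K))
      rw [hw]
      simpa using evalMap_monomial_expo T.1 (φ u)
    have hind : LinearIndependent K w :=
      LinearIndependent.of_comp (LinearMap.funLeft K K φ) (by rw [hcomp]; exact hindchar)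
    rw [hmap, finrank_span_eq_card hind, Fintype.card_finset_len, Fintype.card_fin]
  refine ⟨hcard, hpart2, ?_⟩
  -- part 3: q = 2
  intro hq2
  have hfin : Fintype.card ((torus K s : Finset (Fin s → K))) = 1 := by
    rw [Fintype.card_coe, hcard, hq2]
    simp
  haveI : Module.Finite K (↥(torus K s) → K) := Module.Finite.pi
  have hle : Module.finrank K
      (↥((Submodule.span K (sqfreeMonomials K s d)).map (evalMap (torus K s)))) ≤ 1 := by
    have := Submodule.finrank_le
      ((Submodule.span K (sqfreeMonomials K s d)).map (evalMap (torus K s)))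
    rwa [Module.finrank_pi, hfin] at this
  have hge : 0 < Module.finrank K
      (↥((Submodule.span K (sqfreeMonomials K s d)).map (evalMap (torus K s)))) := by
    rw [Module.finrank_pos_iff_exists_ne_zero]
    obtain ⟨T, _, hTcard⟩ := Finset.exists_subset_card_eq (show d ≤ (Finset.univ : Finset (Fin s)).card by simpa using hds)
    have hmem : monomial (expo T) (1 : K) ∈ Submodule.span K (sqfreeMonomials K s d) := by
      apply Submodule.subset_span
      rw [sqfree_eq_range]
      exact ⟨⟨T, hTcard⟩, rfl⟩
    have hone : (fun _ => (1 : K)) ∈ torus K s := by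
      rw [mem_torus_iff]; intro i; exact one_ne_zero
    refine ⟨⟨evalMap (torus K s) (monomial (expo T) (1 : K)),
      Submodule.mem_map_of_mem hmem⟩, ?_⟩
    intro hzero
    have h0 : evalMap (torus K s) (monomial (expo T) (1 : K)) = 0 := by
      simpa using congrArg Subtype.val hzero
    have := congrFun h0 ⟨fun _ => (1 : K), hone⟩
    rw [evalMap_monomial_expo] at this
    simp at this
  omega
end
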